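/- arXiv:2105.12484 — 2 statements merged into one kernel-verified Lean document; each statement's English description precedes it below -/
import Mathlib

section
/- Let 0 < ε ≤ 1/4 and let T be an ε-intransitive tournament on n vertices. Then for every 0 < c < 1/3, at least one of the following holds: (P1) in every median ordering τ of T there is a set E_τ of backward edges with |E_τ| ≥ cεn²/4 such that every edge e ∈ E_τ has length len_τ(e) ≥ cn/4; or (P2) there is a subtournament T' ⊆ T on at least n/2 vertices that is 2(1−c)ε-intransitive. -/
open Finset

attribute [local instance] Classical.propDecidable

/-- `E` is a tournament relation: irreflexive, and for distinct vertices exactly one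
direction is present. -/
def IsTournament {V : Type} (E : V → V → Prop) : Prop :=
  (∀ v, ¬ E v v) ∧ ∀ u v : V, u ≠ v → (E u v ↔ ¬ E v u)

/-- `x : Fin m → V` is the `k`-th power of a directed path: distinct vertices with
`x i → x j` whenever `i < j ≤ i + k`. -/
def IsPathPower {V : Type} (E : V → V → Prop) (k m : ℕ) (x : Fin m → V) : Prop :=
  Function.Injective x ∧
    ∀ i j : Fin m, (i : ℕ) < (j : ℕ) → (j : ℕ) ≤ (i : ℕ) + k → E (x i) (x j)

/-- `x : Fin m → V` is the `k`-th power of a directed cycle of length `m`: distinct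
vertices with an edge from `x i` to each of its `k` cyclic successors. -/
def IsCyclePower {V : Type} (E : V → V → Prop) (k m : ℕ) (x : Fin m → V) : Prop :=
  Function.Injective x ∧
    ∀ (i : Fin m) (d : ℕ), 1 ≤ d → d ≤ k →
      E (x i) (x ⟨((i : ℕ) + d) % m, Nat.mod_lt _ i.pos⟩)

/-- The set `S` induces a transitive subtournament: its elements can be linearly
ordered so that every edge inside `S` goes from smaller to larger. -/
def IsTransitiveOn {V : Type} (E : V → V → Prop) (S : Finset V) : Prop :=
  ∃ f : V → ℕ, Set.InjOn f ↑S ∧ ∀ u ∈ S, ∀ v ∈ S, E u v → f u < f v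

/-- `X ⇒ Y`: an edge from every vertex of `X` to every vertex of `Y`. -/
def Dominates {V : Type} (E : V → V → Prop) (X Y : Finset V) : Prop :=
  ∀ x ∈ X, ∀ y ∈ Y, E x y

/-- Number of forward edges of `E` with respect to the ordering `σ`. -/
noncomputable def fwdCount {V : Type} [Fintype V] (E : V → V → Prop)
    (σ : V ≃ Fin (Fintype.card V)) : ℕ :=
  (Finset.univ.filter fun p : V × V => E p.1 p.2 ∧ σ p.1 < σ p.2).card

/-- Number of backward edges of `E` with respect to the ordering `σ`. -/
noncomputable def backCount {V : Type} [Fintype V] (E : V → V → Prop)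
    (σ : V ≃ Fin (Fintype.card V)) : ℕ :=
  (Finset.univ.filter fun p : V × V => E p.1 p.2 ∧ σ p.2 < σ p.1).card

/-- A median ordering: a vertex ordering maximizing the number of forward edges. -/
def IsMedianOrder {V : Type} [Fintype V] (E : V → V → Prop)
    (τ : V ≃ Fin (Fintype.card V)) : Prop :=
  ∀ σ : V ≃ Fin (Fintype.card V), fwdCount E σ ≤ fwdCount E τ

/-- An `n`-vertex tournament is `ε`-intransitive if every vertex ordering has at
least `ε n²` backward edges. -/
def IsIntransitive {V : Type} [Fintype V] (E : V → V → Prop) (ε : ℝ) : Prop :=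
  ∀ σ : V ≃ Fin (Fintype.card V),
    ε * (Fintype.card V : ℝ) ^ 2 ≤ (backCount E σ : ℝ)

/-- The sets `A lo ≺ A (lo+1) ≺ ⋯ ≺ A hi` form a splitting of an interval of the
ordering `τ` into consecutive subintervals of size `m` each. -/
def IsIntervalSplit {V : Type} [Fintype V] (τ : V ≃ Fin (Fintype.card V))
    (m lo hi : ℕ) (A : ℕ → Finset V) : Prop :=
  ∃ a : ℕ, ∀ i, lo ≤ i → i ≤ hi → ∀ v : V,
    v ∈ A i ↔ (a + i * m ≤ (τ v : ℕ) ∧ (τ v : ℕ) < a + (i + 1) * m)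

/-- `H` is a `k`-absorber with absorbing part `Q`. -/
def IsAbsorber {V : Type} (E : V → V → Prop) (k : ℕ) (H Q : Finset V) : Prop :=
  ∃ (r : ℕ) (S : ℕ → Finset V) (q : ℕ → V),
    2 ^ (10 * k) < r ∧
    (∀ i j, i ≤ r → j ≤ r → i ≠ j → Disjoint (S i) (S j)) ∧
    (∀ i ≤ r, Disjoint (S i) Q) ∧
    H = (Finset.range (r + 1)).biUnion S ∪ Q ∧
    Q = (Finset.Icc 1 (2 ^ (10 * k))).image q ∧
    Set.InjOn q (Set.Icc 1 (2 ^ (10 * k))) ∧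
    (∀ i ≤ r, (S i).card = 2 * k ∧ IsTransitiveOn E (S i)) ∧
    (∀ i < r, Dominates E (S i) (S (i + 1))) ∧
    Dominates E (S r) (S 0) ∧
    Dominates E (S 0) Q ∧
    Dominates E Q (S (2 ^ (10 * k) + 1)) ∧
    (∀ i, 1 ≤ i → i ≤ 2 ^ (10 * k) →
      Dominates E (S i) {q i} ∧ Dominates E {q i} (S (i + 1)))


section Statement17Helpers

open Finset

variable {V : Type} [Fintype V]

private lemma s17_filt_ext {α : Type*} {P Q : α → Prop} {d1 : DecidablePred P}
    {d2 : DecidablePred Q} (s : Finset α) (h : ∀ x ∈ s, P x ↔ Q x) :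
    @Finset.filter _ P d1 s = @Finset.filter _ Q d2 s := by
  ext x
  simp only [Finset.mem_filter]
  constructor
  · rintro ⟨hx, hp⟩; exact ⟨hx, (h x hx).mp hp⟩
  · rintro ⟨hx, hp⟩; exact ⟨hx, (h x hx).mpr hp⟩

private lemma s17_filter_card_split {α : Type*} (s : Finset α) (P Q : α → Prop)
    {dP : DecidablePred P} {d2 : DecidablePred fun x => P x ∧ Q x}
    {d3 : DecidablePred fun x => P x ∧ ¬ Q x} :
    (@Finset.filter _ P dP s).card
      = (@Finset.filter _ (fun x => P x ∧ Q x) d2 s).card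
        + (@Finset.filter _ (fun x => P x ∧ ¬ Q x) d3 s).card := by
  classical
  have h2 : @Finset.filter _ (fun x => P x ∧ Q x) d2 s = (@Finset.filter _ P dP s).filter Q := by
    ext x
    simp only [Finset.mem_filter]
    tauto
  have h3 : @Finset.filter _ (fun x => P x ∧ ¬ Q x) d3 s
      = (@Finset.filter _ P dP s).filter (fun x => ¬ Q x) := by
    ext x
    simp only [Finset.mem_filter]
    tauto
  rw [h2, h3, Finset.card_filter_add_card_filter_not]

private lemma s17_card_down {α : Type*} (s : Finset (α × α)) (g : α → ℕ)
    {d1 : DecidablePred fun p : α × α => g p.1 < g p.2}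
    {d2 : DecidablePred fun p : α × α => g p.2 < g p.1}
    (hne : ∀ p ∈ s, g p.1 ≠ g p.2) :
    (@Finset.filter _ (fun p => g p.1 < g p.2) d1 s).card
      + (@Finset.filter _ (fun p => g p.2 < g p.1) d2 s).card = s.card := by
  classical
  have h1 : @Finset.filter _ (fun p : α × α => g p.1 < g p.2) d1 s
      = s.filter (fun p => g p.1 < g p.2) := by
    ext x
    simp only [Finset.mem_filter]
  have h : @Finset.filter _ (fun p : α × α => g p.2 < g p.1) d2 s
      = s.filter (fun p => ¬ g p.1 < g p.2) := by
    ext x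
    simp only [Finset.mem_filter]
    constructor
    · rintro ⟨hx, hlt⟩
      exact ⟨hx, by omega⟩
    · rintro ⟨hx, hlt⟩
      have := hne x hx
      exact ⟨hx, by omega⟩
  rw [h1, h, Finset.card_filter_add_card_filter_not]

/-- vertices whose `τ`-position lies in `[a,b)`. -/
private noncomputable def posIn (τ : V ≃ Fin (Fintype.card V)) (a b : ℕ) : Finset V :=
  univ.filter fun v => a ≤ ((τ v : Fin (Fintype.card V)) : ℕ) ∧ ((τ v : Fin (Fintype.card V)) : ℕ) < b

private lemma mem_posIn {τ : V ≃ Fin (Fintype.card V)} {a b : ℕ} {v : V} :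
    v ∈ posIn τ a b ↔ a ≤ ((τ v : Fin (Fintype.card V)) : ℕ) ∧ ((τ v : Fin (Fintype.card V)) : ℕ) < b := by
  simp [posIn]

private lemma card_posIn (τ : V ≃ Fin (Fintype.card V)) (a b : ℕ) (hb : b ≤ Fintype.card V) :
    (posIn τ a b).card = b - a := by
  classical
  have h1 : (posIn τ a b).card = (Finset.Ico a b).card := by
    apply Finset.card_bij (fun v _ => ((τ v : Fin _) : ℕ))
    · intro v hv
      rw [mem_posIn] at hv
      exact Finset.mem_Ico.mpr hv
    · intro u hu v hv h
      exact τ.injective (Fin.val_injective h)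
    · intro mm hmm
      rw [Finset.mem_Ico] at hmm
      have hmn : mm < Fintype.card V := lt_of_lt_of_le hmm.2 hb
      refine ⟨τ.symm ⟨mm, hmn⟩, ?_, ?_⟩
      · rw [mem_posIn]; simp [hmm.1, hmm.2]
      · simp
  rw [h1, Nat.card_Ico]

private lemma pair_filter_card (C : Finset V) (R : V → V → Prop)
    {d1 : DecidablePred fun p : ↥C × ↥C => R ↑p.1 ↑p.2}
    {d2 : DecidablePred fun p : V × V => p.1 ∈ C ∧ p.2 ∈ C ∧ R p.1 p.2} :
    (@Finset.filter _ (fun p : ↥C × ↥C => R ↑p.1 ↑p.2) d1 univ).card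
      = (@Finset.filter _ (fun p : V × V => p.1 ∈ C ∧ p.2 ∈ C ∧ R p.1 p.2) d2 univ).card := by
  classical
  apply Finset.card_bij (fun p _ => ((↑p.1 : V), (↑p.2 : V)))
  · intro p hp
    rw [Finset.mem_filter] at hp ⊢
    exact ⟨Finset.mem_univ _, p.1.2, p.2.2, hp.2⟩
  · intro p _ q _ h
    have h1 : (↑p.1 : V) = ↑q.1 := congrArg Prod.fst h
    have h2 : (↑p.2 : V) = ↑q.2 := congrArg Prod.snd h
    exact Prod.ext (Subtype.ext h1) (Subtype.ext h2)
  · intro p hp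
    rw [Finset.mem_filter] at hp
    exact ⟨(⟨p.1, hp.2.1⟩, ⟨p.2, hp.2.2.1⟩), by
      rw [Finset.mem_filter]; exact ⟨Finset.mem_univ _, hp.2.2.2⟩, rfl⟩

private lemma medianInterval (E : V → V → Prop) (hirr : ∀ v, ¬ E v v)
    (τ : V ≃ Fin (Fintype.card V)) (hmed : IsMedianOrder E τ)
    (a b : ℕ) (hab : a ≤ b) (hb : b ≤ Fintype.card V)
    (f : V → ℕ) (hf : Set.InjOn f (posIn τ a b)) :
    (univ.filter fun p : V × V => E p.1 p.2 ∧ p.1 ∈ posIn τ a b ∧ p.2 ∈ posIn τ a b ∧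
        ((τ p.2 : Fin _) : ℕ) < ((τ p.1 : Fin _) : ℕ)).card
    ≤ (univ.filter fun p : V × V => E p.1 p.2 ∧ p.1 ∈ posIn τ a b ∧ p.2 ∈ posIn τ a b ∧
        f p.2 < f p.1).card := by
  classical
  have hBcard : (posIn τ a b).card = b - a := card_posIn τ a b hb
  have hscard : ((posIn τ a b).image f).card = b - a := by
    rw [Finset.card_image_of_injOn hf, hBcard]
  let ρ := ((posIn τ a b).image f).orderIsoOfFin hscard
  have hrmem : ∀ v, v ∈ posIn τ a b → f v ∈ (posIn τ a b).image f :=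
    fun v hv => Finset.mem_image_of_mem f hv
  let r : ∀ v, v ∈ posIn τ a b → Fin (b - a) := fun v hv => ρ.symm ⟨f v, hrmem v hv⟩
  have hrlt : ∀ u (hu : u ∈ posIn τ a b) v (hv : v ∈ posIn τ a b),
      (r u hu < r v hv ↔ f u < f v) := by
    intro u hu v hv
    show ρ.symm _ < ρ.symm _ ↔ _
    rw [ρ.symm.lt_iff_lt, Subtype.mk_lt_mk]
  have hbound : ∀ v (hv : v ∈ posIn τ a b), a + (r v hv : ℕ) < Fintype.card V := by
    intro v hv
    have := (r v hv).isLt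
    omega
  let g : V → Fin (Fintype.card V) := fun v =>
    if hv : v ∈ posIn τ a b then ⟨a + (r v hv : ℕ), hbound v hv⟩ else τ v
  have hgB : ∀ v (hv : v ∈ posIn τ a b), a ≤ (g v : ℕ) ∧ (g v : ℕ) < b := by
    intro v hv
    have h1 : g v = ⟨a + (r v hv : ℕ), hbound v hv⟩ := dif_pos hv
    rw [h1]
    have := (r v hv).isLt
    simp only []
    omega
  have hgnB : ∀ v, v ∉ posIn τ a b → g v = τ v := fun v hv => dif_neg hv
  have hginj : Function.Injective g := by
    intro u v huv
    by_cases hu : u ∈ posIn τ a b <;> by_cases hv : v ∈ posIn τ a b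
    · have h1 : g u = ⟨a + (r u hu : ℕ), hbound u hu⟩ := dif_pos hu
      have h2 : g v = ⟨a + (r v hv : ℕ), hbound v hv⟩ := dif_pos hv
      rw [h1, h2] at huv
      have h3 : (r u hu : ℕ) = (r v hv : ℕ) := by
        have := congrArg Fin.val huv
        simp only [] at this
        omega
      have h4 : r u hu = r v hv := Fin.ext h3
      have h5 : (⟨f u, hrmem u hu⟩ : {x // x ∈ (posIn τ a b).image f}) = ⟨f v, hrmem v hv⟩ :=
        ρ.symm.injective h4
      exact hf hu hv (Subtype.mk_eq_mk.mp h5)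
    · exfalso
      have h1 := hgB u hu
      rw [huv, hgnB v hv] at h1
      rw [mem_posIn] at hv
      exact hv ⟨h1.1, h1.2⟩
    · exfalso
      have h1 := hgB v hv
      rw [← huv, hgnB u hu] at h1
      rw [mem_posIn] at hu
      exact hu ⟨h1.1, h1.2⟩
    · rw [hgnB u hu, hgnB v hv] at huv
      exact τ.injective huv
  have hgbij : Function.Bijective g := by
    rw [Fintype.bijective_iff_injective_and_card]
    exact ⟨hginj, by simp⟩
  let σ : V ≃ Fin (Fintype.card V) := Equiv.ofBijective g hgbij
  have hσ : ∀ v, σ v = g v := fun v => rfl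
  have hfwd : fwdCount E σ ≤ fwdCount E τ := hmed σ
  have split : ∀ σ' : V ≃ Fin (Fintype.card V), fwdCount E σ' =
      (univ.filter fun p : V × V => (E p.1 p.2 ∧ σ' p.1 < σ' p.2) ∧
        (p.1 ∈ posIn τ a b ∧ p.2 ∈ posIn τ a b)).card
      + (univ.filter fun p : V × V => (E p.1 p.2 ∧ σ' p.1 < σ' p.2) ∧
        ¬ (p.1 ∈ posIn τ a b ∧ p.2 ∈ posIn τ a b)).card := by
    intro σ'
    have e0 : fwdCount E σ' = (univ.filter fun p : V × V => E p.1 p.2 ∧ σ' p.1 < σ' p.2).card := by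
      unfold fwdCount
      congr 1
    rw [e0]
    exact s17_filter_card_split _ _ _
  have hcmp : ∀ x y : V, ¬ (x ∈ posIn τ a b ∧ y ∈ posIn τ a b) → (σ x < σ y ↔ τ x < τ y) := by
    intro x y hxy
    rw [hσ, hσ, Fin.lt_def, Fin.lt_def]
    by_cases hx : x ∈ posIn τ a b <;> by_cases hy : y ∈ posIn τ a b
    · exact absurd ⟨hx, hy⟩ hxy
    · have b1 := hgB x hx
      have b2 := hgnB y hy
      have b3 := mem_posIn.mp hx
      have b4 : ¬ (a ≤ ((τ y : Fin _) : ℕ) ∧ ((τ y : Fin _) : ℕ) < b) := fun h => hy (mem_posIn.mpr h)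
      rw [b2]
      omega
    · have b1 := hgB y hy
      have b2 := hgnB x hx
      have b3 := mem_posIn.mp hy
      have b4 : ¬ (a ≤ ((τ x : Fin _) : ℕ) ∧ ((τ x : Fin _) : ℕ) < b) := fun h => hx (mem_posIn.mpr h)
      rw [b2]
      omega
    · rw [hgnB x hx, hgnB y hy]
  have hσf : ∀ x y (hx : x ∈ posIn τ a b) (hy : y ∈ posIn τ a b), (σ x < σ y ↔ f x < f y) := by
    intro x y hx hy
    rw [hσ, hσ, Fin.lt_def]
    have h1 : g x = ⟨a + (r x hx : ℕ), hbound x hx⟩ := dif_pos hx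
    have h2 : g y = ⟨a + (r y hy : ℕ), hbound y hy⟩ := dif_pos hy
    rw [h1, h2]
    simp only []
    rw [← hrlt x hx y hy]
    constructor
    · intro h; exact Fin.lt_def.mpr (by omega)
    · intro h; have := Fin.lt_def.mp h; omega
  have hN : (univ.filter fun p : V × V => (E p.1 p.2 ∧ σ p.1 < σ p.2) ∧
        ¬ (p.1 ∈ posIn τ a b ∧ p.2 ∈ posIn τ a b))
      = (univ.filter fun p : V × V => (E p.1 p.2 ∧ τ p.1 < τ p.2) ∧
        ¬ (p.1 ∈ posIn τ a b ∧ p.2 ∈ posIn τ a b)) := by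
    apply Finset.filter_congr
    intro p _
    constructor
    · rintro ⟨⟨hE, hlt⟩, hq⟩
      exact ⟨⟨hE, (hcmp p.1 p.2 hq).mp hlt⟩, hq⟩
    · rintro ⟨⟨hE, hlt⟩, hq⟩
      exact ⟨⟨hE, (hcmp p.1 p.2 hq).mpr hlt⟩, hq⟩
  have hA : (univ.filter fun p : V × V => (E p.1 p.2 ∧ σ p.1 < σ p.2) ∧
        (p.1 ∈ posIn τ a b ∧ p.2 ∈ posIn τ a b))
      = (univ.filter fun p : V × V => (E p.1 p.2 ∧ f p.1 < f p.2) ∧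
        (p.1 ∈ posIn τ a b ∧ p.2 ∈ posIn τ a b)) := by
    apply Finset.filter_congr
    intro p _
    constructor
    · rintro ⟨⟨hE, hlt⟩, hq⟩
      exact ⟨⟨hE, (hσf p.1 p.2 hq.1 hq.2).mp hlt⟩, hq⟩
    · rintro ⟨⟨hE, hlt⟩, hq⟩
      exact ⟨⟨hE, (hσf p.1 p.2 hq.1 hq.2).mpr hlt⟩, hq⟩
  have hup : (univ.filter fun p : V × V => (E p.1 p.2 ∧ f p.1 < f p.2) ∧
        (p.1 ∈ posIn τ a b ∧ p.2 ∈ posIn τ a b)).card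
      ≤ (univ.filter fun p : V × V => (E p.1 p.2 ∧ τ p.1 < τ p.2) ∧
        (p.1 ∈ posIn τ a b ∧ p.2 ∈ posIn τ a b)).card := by
    have e1 := split σ
    have e2 := split τ
    rw [hN, hA] at e1
    have := hfwd
    omega
  set s0 : Finset (V × V) := univ.filter
    (fun p : V × V => E p.1 p.2 ∧ p.1 ∈ posIn τ a b ∧ p.2 ∈ posIn τ a b) with hs0
  have hneτ : ∀ p ∈ s0, ((τ p.1 : Fin _) : ℕ) ≠ ((τ p.2 : Fin _) : ℕ) := by
    intro p hp
    rw [hs0, Finset.mem_filter] at hp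
    intro h
    have : p.1 = p.2 := τ.injective (Fin.val_injective h)
    rw [this] at hp
    exact hirr p.2 hp.2.1
  have hnef : ∀ p ∈ s0, f p.1 ≠ f p.2 := by
    intro p hp
    rw [hs0, Finset.mem_filter] at hp
    intro h
    have : p.1 = p.2 := hf hp.2.2.1 hp.2.2.2 h
    rw [this] at hp
    exact hirr p.2 hp.2.1
  have cdτ : (s0.filter fun p => ((τ p.1 : Fin _) : ℕ) < ((τ p.2 : Fin _) : ℕ)).card
      + (s0.filter fun p => ((τ p.2 : Fin _) : ℕ) < ((τ p.1 : Fin _) : ℕ)).card = s0.card :=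
    s17_card_down s0 (fun v => ((τ v : Fin (Fintype.card V)) : ℕ)) hneτ
  have cdf : (s0.filter fun p => f p.1 < f p.2).card
      + (s0.filter fun p => f p.2 < f p.1).card = s0.card :=
    s17_card_down s0 f hnef
  have hτval : s0.filter (fun p => ((τ p.1 : Fin _) : ℕ) < ((τ p.2 : Fin _) : ℕ))
      = univ.filter fun p : V × V => (E p.1 p.2 ∧ τ p.1 < τ p.2) ∧
        (p.1 ∈ posIn τ a b ∧ p.2 ∈ posIn τ a b) := by
    rw [hs0, Finset.filter_filter]
    apply Finset.filter_congr
    intro p _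
    constructor
    · rintro ⟨⟨hE, h1, h2⟩, h3⟩; exact ⟨⟨hE, Fin.lt_def.mpr h3⟩, h1, h2⟩
    · rintro ⟨⟨hE, h3⟩, h1, h2⟩; exact ⟨⟨hE, h1, h2⟩, Fin.lt_def.mp h3⟩
  have hfval : s0.filter (fun p => f p.1 < f p.2)
      = univ.filter fun p : V × V => (E p.1 p.2 ∧ f p.1 < f p.2) ∧
        (p.1 ∈ posIn τ a b ∧ p.2 ∈ posIn τ a b) := by
    rw [hs0, Finset.filter_filter]
    apply Finset.filter_congr
    intro p _
    constructor
    · rintro ⟨⟨hE, h1, h2⟩, h3⟩; exact ⟨⟨hE, h3⟩, h1, h2⟩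
    · rintro ⟨⟨hE, h3⟩, h1, h2⟩; exact ⟨⟨hE, h1, h2⟩, h3⟩
  have hupτf : (s0.filter (fun p => f p.1 < f p.2)).card
      ≤ (s0.filter (fun p => ((τ p.1 : Fin _) : ℕ) < ((τ p.2 : Fin _) : ℕ))).card := by
    rw [hτval, hfval]
    exact hup
  have hgoal1 : (univ.filter fun p : V × V => E p.1 p.2 ∧ p.1 ∈ posIn τ a b ∧ p.2 ∈ posIn τ a b ∧
      ((τ p.2 : Fin _) : ℕ) < ((τ p.1 : Fin _) : ℕ))
      = s0.filter (fun p => ((τ p.2 : Fin _) : ℕ) < ((τ p.1 : Fin _) : ℕ)) := by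
    rw [hs0, Finset.filter_filter]
    apply Finset.filter_congr
    intro p _
    constructor
    · rintro ⟨hE, h1, h2, h3⟩; exact ⟨⟨hE, h1, h2⟩, h3⟩
    · rintro ⟨⟨hE, h1, h2⟩, h3⟩; exact ⟨hE, h1, h2, h3⟩
  have hgoal2 : (univ.filter fun p : V × V => E p.1 p.2 ∧ p.1 ∈ posIn τ a b ∧ p.2 ∈ posIn τ a b ∧
      f p.2 < f p.1)
      = s0.filter (fun p => f p.2 < f p.1) := by
    rw [hs0, Finset.filter_filter]
    apply Finset.filter_congr
    intro p _
    constructor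
    · rintro ⟨hE, h1, h2, h3⟩; exact ⟨⟨hE, h1, h2⟩, h3⟩
    · rintro ⟨⟨hE, h1, h2⟩, h3⟩; exact ⟨hE, h1, h2, h3⟩
  rw [hgoal1, hgoal2]
  omega

private lemma no_adjacent_back (E : V → V → Prop) (hT : IsTournament E)
    (τ : V ≃ Fin (Fintype.card V)) (hmed : IsMedianOrder E τ)
    (u v : V) (hE : E u v) (h1 : ((τ v : Fin _) : ℕ) + 1 = ((τ u : Fin _) : ℕ)) : False := by
  classical
  have huv : u ≠ v := by
    intro h; rw [h] at hE; exact hT.1 v hE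
  set σ : V ≃ Fin (Fintype.card V) := τ.trans (Equiv.swap (τ u) (τ v)) with hσdef
  have hσu : σ u = τ v := by
    rw [hσdef]; simp [Equiv.swap_apply_left]
  have hσv : σ v = τ u := by
    rw [hσdef]; simp [Equiv.swap_apply_right]
  have hσw : ∀ w : V, w ≠ u → w ≠ v → σ w = τ w := by
    intro w hwu hwv
    rw [hσdef]
    simp only [Equiv.trans_apply]
    apply Equiv.swap_apply_of_ne_of_ne
    · exact fun h => hwu (τ.injective h)
    · exact fun h => hwv (τ.injective h)
  have hsub : insert (u, v) (univ.filter fun p : V × V => E p.1 p.2 ∧ τ p.1 < τ p.2)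
      ⊆ (univ.filter fun p : V × V => E p.1 p.2 ∧ σ p.1 < σ p.2) := by
    intro p hp
    rw [Finset.mem_insert] at hp
    rcases hp with hp | hp
    · subst hp
      rw [Finset.mem_filter]
      refine ⟨Finset.mem_univ _, hE, ?_⟩
      rw [hσu, hσv, Fin.lt_def]
      omega
    · rw [Finset.mem_filter] at hp ⊢
      obtain ⟨-, hEp, hlt⟩ := hp
      refine ⟨Finset.mem_univ _, hEp, ?_⟩
      have hne : p.1 ≠ p.2 := by
        intro h; rw [h] at hEp; exact hT.1 p.2 hEp
      rw [Fin.lt_def] at hlt ⊢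
      by_cases e1 : p.1 = u <;> by_cases e2 : p.2 = v
      · exfalso; rw [e1, e2] at hlt; omega
      · have e3 : p.2 ≠ u := by
          intro h; rw [e1, h] at hlt; omega
        rw [e1, hσu, hσw p.2 e3 e2]
        rw [e1] at hlt
        have : (τ p.2 : ℕ) ≠ (τ v : ℕ) := fun h => e2 (τ.injective (Fin.val_injective h))
        omega
      · have e3 : p.1 ≠ v := by
          intro h; rw [e2] at hne; exact hne h
        by_cases e4 : p.1 = u
        · exact absurd e4 e1
        · rw [e2, hσv, hσw p.1 e4 e3]
          rw [e2] at hlt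
          have : (τ p.1 : ℕ) ≠ (τ u : ℕ) := fun h => e4 (τ.injective (Fin.val_injective h))
          omega
      · by_cases e3 : p.1 = v <;> by_cases e4 : p.2 = u
        · exfalso
          rw [e3, e4] at hEp
          exact ((hT.2 u v huv).mp hE) hEp
        · rw [e3, hσv, hσw p.2 e4 e2]
          rw [e3] at hlt
          have : (τ p.2 : ℕ) ≠ (τ u : ℕ) := fun h => e4 (τ.injective (Fin.val_injective h))
          omega
        · rw [e4, hσu, hσw p.1 e1 e3]
          rw [e4] at hlt
          have : (τ p.1 : ℕ) ≠ (τ v : ℕ) := fun h => e3 (τ.injective (Fin.val_injective h))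
          omega
        · rw [hσw p.1 e1 e3, hσw p.2 e4 e2]
          exact hlt
  have hnotmem : (u, v) ∉ (univ.filter fun p : V × V => E p.1 p.2 ∧ τ p.1 < τ p.2) := by
    rw [Finset.mem_filter]
    rintro ⟨-, -, hlt⟩
    have hlt' : ((τ u : Fin _) : ℕ) < ((τ v : Fin _) : ℕ) := Fin.lt_def.mp hlt
    omega
  have hcard : fwdCount E τ + 1 ≤ fwdCount E σ := by
    have h2 := Finset.card_le_card hsub
    rw [Finset.card_insert_of_notMem hnotmem] at h2
    have e1 : fwdCount E τ = (univ.filter fun p : V × V => E p.1 p.2 ∧ τ p.1 < τ p.2).card := by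
      unfold fwdCount; congr 1
    have e2 : fwdCount E σ = (univ.filter fun p : V × V => E p.1 p.2 ∧ σ p.1 < σ p.2).card := by
      unfold fwdCount; congr 1
    omega
  have := hmed σ
  omega

private lemma s17_arith (n h c : ℝ) (hc0 : 0 < c) (hc : c < 1/3)
    (hcn : 8 < c * n) (h1 : n ≤ 2 * h) (h2 : 2 * h ≤ n + 1) :
    2 * n * (1 - c) * h ^ 2 ≤ (1 - c / 4) * n ^ 2 * (h - c * n / 4) := by
  have hn : 0 < n := by nlinarith
  have hA0 : 0 ≤ 2 * h - n := by linarith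
  have hA1 : 0 ≤ 1 - (2 * h - n) := by linarith
  have h8n : 8 * n ≤ c * n * n := by nlinarith
  have h64 : 64 ≤ (c * n) ^ 2 := by nlinarith
  nlinarith [mul_nonneg hA0 hA1, mul_nonneg (mul_nonneg hA0 hA1) hn.le,
    mul_nonneg (mul_nonneg hA0 hn.le) hc0.le,
    mul_nonneg (mul_nonneg (mul_nonneg hA0 hA0) hc0.le) hn.le,
    mul_nonneg (mul_nonneg hA0 hc0.le) hn.le, mul_nonneg (mul_nonneg hA0 hA0) hc0.le]

end Statement17Helpers

set_option maxHeartbeats 4000000 in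
/-- density-increment dichotomy for `ε`-intransitive tournaments. -/
theorem statement_17 (V : Type) [Fintype V] (E : V → V → Prop) (hT : IsTournament E)
    (ε c : ℝ) (hε0 : 0 < ε) (hε : ε ≤ 1 / 4) (hc0 : 0 < c) (hc : c < 1 / 3)
    (hI : IsIntransitive E ε) :
    (∀ τ : V ≃ Fin (Fintype.card V), IsMedianOrder E τ →
      ∃ Eτ : Finset (V × V),
        (∀ e ∈ Eτ, E e.1 e.2 ∧ τ e.2 < τ e.1) ∧
        c * ε * (Fintype.card V : ℝ) ^ 2 / 4 ≤ (Eτ.card : ℝ) ∧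
        ∀ e ∈ Eτ, c * (Fintype.card V : ℝ) / 4 ≤
          ((τ e.1 : ℕ) : ℝ) - ((τ e.2 : ℕ) : ℝ)) ∨
    (∃ W : Finset V, (Fintype.card V : ℝ) / 2 ≤ (W.card : ℝ) ∧
      IsIntransitive (fun u v : ↥W => E ↑u ↑v) (2 * (1 - c) * ε)) := by
  classical
  rw [or_iff_not_imp_left]
  intro hP1
  by_contra hP2
  push_neg at hP1
  simp only [IsIntransitive, not_exists, not_and, not_forall, not_le] at hP2
  set n := Fintype.card V with hndef
  obtain ⟨τ, hmed, hneg⟩ := hP1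
  set q := n / 2 with hqdef
  set h := n - q with hhdef
  have hqn : 2 * q ≤ n ∧ n ≤ 2 * q + 1 := by omega
  have hh2 : n ≤ 2 * h ∧ 2 * h ≤ n + 1 := by omega
  -- long and short backward edges
  set Long : Finset (V × V) := univ.filter fun p : V × V =>
    E p.1 p.2 ∧ τ p.2 < τ p.1 ∧
      (c * (n : ℝ) / 4 ≤ ((τ p.1 : ℕ) : ℝ) - ((τ p.2 : ℕ) : ℝ)) with hLongdef
  set Short : Finset (V × V) := univ.filter fun p : V × V =>
    E p.1 p.2 ∧ τ p.2 < τ p.1 ∧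
      (((τ p.1 : ℕ) : ℝ) - ((τ p.2 : ℕ) : ℝ) < c * (n : ℝ) / 4) with hShortdef
  set Back : Finset (V × V) := univ.filter fun p : V × V =>
    E p.1 p.2 ∧ τ p.2 < τ p.1 with hBackdef
  have hLongcard : (Long.card : ℝ) < c * ε * (n : ℝ) ^ 2 / 4 := by
    by_contra hcon
    push_neg at hcon
    obtain ⟨e, he, hlen⟩ := hneg Long
      (by
        intro e he
        rw [hLongdef, Finset.mem_filter] at he
        exact ⟨he.2.1, he.2.2.1⟩)
      hcon
    rw [hLongdef, Finset.mem_filter] at he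
    exact absurd he.2.2.2 (not_le.mpr hlen)
  have hBackcard : ε * (n : ℝ) ^ 2 ≤ (Back.card : ℝ) := by
    have e1 : backCount E τ = Back.card := by
      unfold backCount; congr 1
    have := hI τ
    rw [e1] at this
    exact this
  have hBSL : Back.card = Short.card + Long.card := by
    have e1 : Back.card = (univ.filter fun p : V × V => (E p.1 p.2 ∧ τ p.2 < τ p.1) ∧
        (((τ p.1 : ℕ) : ℝ) - ((τ p.2 : ℕ) : ℝ) < c * (n : ℝ) / 4)).card
        + (univ.filter fun p : V × V => (E p.1 p.2 ∧ τ p.2 < τ p.1) ∧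
        ¬ (((τ p.1 : ℕ) : ℝ) - ((τ p.2 : ℕ) : ℝ) < c * (n : ℝ) / 4)).card := by
      rw [hBackdef]
      exact s17_filter_card_split _ _ _
    have e2 : (univ.filter fun p : V × V => (E p.1 p.2 ∧ τ p.2 < τ p.1) ∧
        (((τ p.1 : ℕ) : ℝ) - ((τ p.2 : ℕ) : ℝ) < c * (n : ℝ) / 4)) = Short := by
      rw [hShortdef]
      apply s17_filt_ext
      intro p _
      tauto
    have e3 : (univ.filter fun p : V × V => (E p.1 p.2 ∧ τ p.2 < τ p.1) ∧
        ¬ (((τ p.1 : ℕ) : ℝ) - ((τ p.2 : ℕ) : ℝ) < c * (n : ℝ) / 4)) = Long := by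
      rw [hLongdef]
      apply s17_filt_ext
      intro p _
      constructor
      · rintro ⟨⟨h1, h2⟩, h3⟩; exact ⟨h1, h2, not_lt.mp h3⟩
      · rintro ⟨h1, h2, h3⟩; exact ⟨⟨h1, h2⟩, not_lt.mpr h3⟩
    rw [e2, e3] at e1
    exact e1
  have hShortcard : ε * (n : ℝ) ^ 2 - c * ε * (n : ℝ) ^ 2 / 4 < (Short.card : ℝ) := by
    have : (Back.card : ℝ) = (Short.card : ℝ) + (Long.card : ℝ) := by
      rw [hBSL]; push_cast; ring
    linarith
  -- there is a short edge, hence c * n > 8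
  have hShortpos : 0 < Short.card := by
    have h1 : (0:ℝ) ≤ ε * (n : ℝ) ^ 2 - c * ε * (n : ℝ) ^ 2 / 4 := by
      nlinarith [sq_nonneg ((n:ℝ)), mul_nonneg hε0.le (sq_nonneg ((n:ℝ)))]
    have h2 : (0:ℝ) < (Short.card : ℝ) := lt_of_le_of_lt h1 hShortcard
    exact_mod_cast h2
  
  obtain ⟨p0, hp0⟩ := Finset.card_pos.mp hShortpos
  have hp0' : E p0.1 p0.2 ∧ τ p0.2 < τ p0.1 ∧
      (((τ p0.1 : ℕ) : ℝ) - ((τ p0.2 : ℕ) : ℝ) < c * (n : ℝ) / 4) := by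
    rw [hShortdef, Finset.mem_filter] at hp0
    exact hp0.2
  have hlen2 : ((τ p0.2 : Fin n) : ℕ) + 2 ≤ ((τ p0.1 : Fin n) : ℕ) := by
    have hlt := Fin.lt_def.mp hp0'.2.1
    rcases Nat.lt_or_ge (((τ p0.2 : Fin n) : ℕ) + 1) ((τ p0.1 : Fin n) : ℕ) with hgt | hle
    · omega
    · exfalso
      exact no_adjacent_back E hT τ hmed p0.1 p0.2 hp0'.1 (by omega)
  have hcn : (8 : ℝ) < c * (n : ℝ) := by
    have h2r : (2 : ℝ) ≤ ((τ p0.1 : ℕ) : ℝ) - ((τ p0.2 : ℕ) : ℝ) := by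
      have h2 : (((τ p0.2 : Fin n) : ℕ) : ℝ) + 2 ≤ (((τ p0.1 : Fin n) : ℕ) : ℝ) := by
        exact_mod_cast hlen2
      linarith
    linarith [hp0'.2.2]
  
  have hn24 : 24 < n := by
    have h1 : c * (n : ℝ) ≤ (n : ℝ) / 3 := by
      have : (0:ℝ) ≤ (n:ℝ) := Nat.cast_nonneg n
      nlinarith
    have h2 : (24 : ℝ) < (n : ℝ) := by linarith
    exact_mod_cast h2
  -- candidate intervals
  set L1 : ℕ → ℕ := fun k => if k ≤ q then k else 0 with hL1def
  set R1 : ℕ → ℕ := fun k => if k ≤ q then k + h else h + k - n with hR1def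
  set L2 : ℕ → ℕ := fun k => if k ≤ q then n else k with hL2def
  have hevals : ∀ k, (k ≤ q → L1 k = k ∧ R1 k = k + h ∧ L2 k = n) ∧
      (¬ k ≤ q → L1 k = 0 ∧ R1 k = h + k - n ∧ L2 k = k) := by
    intro k
    constructor <;> intro hkq
    · rw [hL1def, hR1def, hL2def]
      simp [if_pos hkq]
    · rw [hL1def, hR1def, hL2def]
      simp [if_neg hkq]
  have hfacts : ∀ k, 1 ≤ k → k ≤ n → L1 k ≤ R1 k ∧ R1 k ≤ L2 k ∧ L2 k ≤ n ∧ R1 k ≤ n ∧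
      ((R1 k - L1 k) + (n - L2 k) = h ∧ (n ≤ L2 k ∨ R1 k + q ≤ L2 k)) := by
    intro k hk1 hk2
    rw [hL1def, hR1def, hL2def]
    by_cases hkq : k ≤ q <;> simp only [hkq, if_true, if_false] <;> omega
  set CC : ℕ → Finset V := fun k => posIn τ (L1 k) (R1 k) ∪ posIn τ (L2 k) n with hCCdef
  have hdisjBB : ∀ k, 1 ≤ k → k ≤ n →
      Disjoint (posIn τ (L1 k) (R1 k)) (posIn τ (L2 k) n) := by
    intro k hk1 hk2
    obtain ⟨f1, f2, f3, f4, f5⟩ := hfacts k hk1 hk2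
    rw [Finset.disjoint_left]
    intro v hv1 hv2
    rw [mem_posIn] at hv1 hv2
    omega
  have hCCcard : ∀ k, 1 ≤ k → k ≤ n → (CC k).card = h := by
    intro k hk1 hk2
    obtain ⟨f1, f2, f3, f4, f5, f6⟩ := hfacts k hk1 hk2
    rw [hCCdef]
    simp only []
    rw [Finset.card_union_of_disjoint (hdisjBB k hk1 hk2), card_posIn τ _ _ f4,
      card_posIn τ _ _ (le_refl n)]
    omega
  
  -- per-candidate bound
  have key : ∀ k, 1 ≤ k → k ≤ n →
      ((Short.filter fun p : V × V => p.1 ∈ CC k ∧ p.2 ∈ CC k).card : ℝ)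
        < 2 * (1 - c) * ε * (h : ℝ) ^ 2 := by
    intro k hk1 hk2
    obtain ⟨f1, f2, f3, f4, f5, f6⟩ := hfacts k hk1 hk2
    have hhalf : (n : ℝ) / 2 ≤ ((CC k).card : ℝ) := by
      rw [hCCcard k hk1 hk2]
      have : n ≤ 2 * h := hh2.1
      have h2 : (n : ℝ) ≤ 2 * (h : ℝ) := by exact_mod_cast this
      linarith
    obtain ⟨σ', hσ'⟩ := hP2 (CC k) hhalf
    have hcoe : (Fintype.card ↥(CC k)) = h := by
      rw [Fintype.card_coe, hCCcard k hk1 hk2]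
    rw [hcoe] at hσ'
    -- the induced position function
    set f : V → ℕ := (fun v => if hv : v ∈ CC k then ((σ' ⟨v, hv⟩ : Fin _) : ℕ) else 0) with hfdef
    have hfval : ∀ v (hv : v ∈ CC k), f v = ((σ' ⟨v, hv⟩ : Fin _) : ℕ) := by
      intro v hv
      rw [hfdef]
      simp only [dif_pos hv]
    have hfinj : Set.InjOn f (CC k) := by
      intro u hu v hv huv
      rw [Finset.mem_coe] at hu hv
      rw [hfval u hu, hfval v hv] at huv
      have h1 : σ' ⟨u, hu⟩ = σ' ⟨v, hv⟩ := Fin.ext huv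
      have h2 := σ'.injective h1
      exact Subtype.mk_eq_mk.mp h2
    -- backCount of σ' as a V×V filter
    have b1 : backCount (fun u v : ↥(CC k) => E ↑u ↑v) σ'
        = (univ.filter fun p : V × V => E p.1 p.2 ∧ p.1 ∈ CC k ∧ p.2 ∈ CC k ∧
            f p.2 < f p.1).card := by
      have e1 : backCount (fun u v : ↥(CC k) => E ↑u ↑v) σ'
          = (univ.filter fun p : ↥(CC k) × ↥(CC k) =>
              E (↑p.1) (↑p.2) ∧ f (↑p.2) < f (↑p.1)).card := by
        unfold backCount
        apply congrArg
        apply s17_filt_ext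
        intro p _
        apply and_congr_right
        intro _
        rw [hfval _ p.2.2, hfval _ p.1.2]
        have e2 : (⟨(↑p.2 : V), p.2.2⟩ : ↥(CC k)) = p.2 := Subtype.coe_eta _ _
        have e3 : (⟨(↑p.1 : V), p.1.2⟩ : ↥(CC k)) = p.1 := Subtype.coe_eta _ _
        rw [e2, e3]
        exact Fin.lt_def
      have e4 : (univ.filter fun p : ↥(CC k) × ↥(CC k) =>
              E (↑p.1) (↑p.2) ∧ f (↑p.2) < f (↑p.1)).card
          = (univ.filter fun p : V × V => p.1 ∈ CC k ∧ p.2 ∈ CC k ∧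
              (E p.1 p.2 ∧ f p.2 < f p.1)).card :=
        pair_filter_card (CC k) (fun u v => E u v ∧ f v < f u)
      have e5 : (univ.filter fun p : V × V => p.1 ∈ CC k ∧ p.2 ∈ CC k ∧
              (E p.1 p.2 ∧ f p.2 < f p.1))
          = (univ.filter fun p : V × V => E p.1 p.2 ∧ p.1 ∈ CC k ∧ p.2 ∈ CC k ∧
              f p.2 < f p.1) := by
        apply s17_filt_ext
        intro p _
        tauto
      rw [e1, e4, e5]
    -- split into the two intervals
    have hB1C : ∀ v, v ∈ posIn τ (L1 k) (R1 k) → v ∈ CC k := by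
      intro v hv
      rw [hCCdef]
      exact Finset.mem_union_left _ hv
    have hB2C : ∀ v, v ∈ posIn τ (L2 k) n → v ∈ CC k := by
      intro v hv
      rw [hCCdef]
      exact Finset.mem_union_right _ hv
    have b2 : (univ.filter fun p : V × V => E p.1 p.2 ∧ p.1 ∈ posIn τ (L1 k) (R1 k) ∧
            p.2 ∈ posIn τ (L1 k) (R1 k) ∧ f p.2 < f p.1).card
        + (univ.filter fun p : V × V => E p.1 p.2 ∧ p.1 ∈ posIn τ (L2 k) n ∧
            p.2 ∈ posIn τ (L2 k) n ∧ f p.2 < f p.1).card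
        ≤ (univ.filter fun p : V × V => E p.1 p.2 ∧ p.1 ∈ CC k ∧ p.2 ∈ CC k ∧
            f p.2 < f p.1).card := by
      rw [← Finset.card_union_of_disjoint]
      · apply Finset.card_le_card
        intro p hp
        rw [Finset.mem_union, Finset.mem_filter, Finset.mem_filter] at hp
        rw [Finset.mem_filter]
        rcases hp with ⟨hu, hE, h1, h2, h3⟩ | ⟨hu, hE, h1, h2, h3⟩
        · exact ⟨hu, hE, hB1C _ h1, hB1C _ h2, h3⟩
        · exact ⟨hu, hE, hB2C _ h1, hB2C _ h2, h3⟩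
      · rw [Finset.disjoint_left]
        intro p hp1 hp2
        rw [Finset.mem_filter] at hp1 hp2
        have d1 := mem_posIn.mp hp1.2.2.1
        have d2 := mem_posIn.mp hp2.2.2.1
        omega
    -- median order property on each interval
    have hinjB1 : Set.InjOn f (posIn τ (L1 k) (R1 k)) := by
      apply Set.InjOn.mono _ hfinj
      intro v hv
      rw [Finset.mem_coe] at hv ⊢
      exact hB1C v hv
    have hinjB2 : Set.InjOn f (posIn τ (L2 k) n) := by
      apply Set.InjOn.mono _ hfinj
      intro v hv
      rw [Finset.mem_coe] at hv ⊢
      exact hB2C v hv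
    have b3 := medianInterval E hT.1 τ hmed (L1 k) (R1 k) f1 f4 f hinjB1
    have b4 := medianInterval E hT.1 τ hmed (L2 k) n (by omega) (le_refl n) f hinjB2
    -- short edges inside each interval are backward edges for τ
    have b5 : ∀ (a b : ℕ), (Short.filter fun p : V × V =>
          p.1 ∈ posIn τ a b ∧ p.2 ∈ posIn τ a b).card
        ≤ (univ.filter fun p : V × V => E p.1 p.2 ∧ p.1 ∈ posIn τ a b ∧ p.2 ∈ posIn τ a b ∧
            ((τ p.2 : Fin _) : ℕ) < ((τ p.1 : Fin _) : ℕ)).card := by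
      intro a b
      apply Finset.card_le_card
      intro p hp
      rw [Finset.mem_filter, hShortdef, Finset.mem_filter] at hp
      rw [Finset.mem_filter]
      exact ⟨hp.1.1, hp.1.2.1, hp.2.1, hp.2.2, Fin.lt_def.mp hp.1.2.2.1⟩
    -- short edges in CC k split into the two intervals
    have b6 : (Short.filter fun p : V × V => p.1 ∈ CC k ∧ p.2 ∈ CC k).card
        ≤ (Short.filter fun p : V × V =>
            p.1 ∈ posIn τ (L1 k) (R1 k) ∧ p.2 ∈ posIn τ (L1 k) (R1 k)).card
          + (Short.filter fun p : V × V =>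
            p.1 ∈ posIn τ (L2 k) n ∧ p.2 ∈ posIn τ (L2 k) n).card := by
      have hsub : (Short.filter fun p : V × V => p.1 ∈ CC k ∧ p.2 ∈ CC k)
          ⊆ (Short.filter fun p : V × V =>
              p.1 ∈ posIn τ (L1 k) (R1 k) ∧ p.2 ∈ posIn τ (L1 k) (R1 k))
            ∪ (Short.filter fun p : V × V =>
              p.1 ∈ posIn τ (L2 k) n ∧ p.2 ∈ posIn τ (L2 k) n) := by
        intro p hp
        rw [Finset.mem_filter] at hp
        obtain ⟨hpS, hm1, hm2⟩ := hp
        have hpS' : E p.1 p.2 ∧ τ p.2 < τ p.1 ∧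
            (((τ p.1 : ℕ) : ℝ) - ((τ p.2 : ℕ) : ℝ) < c * (n : ℝ) / 4) := by
          rw [hShortdef, Finset.mem_filter] at hpS
          exact hpS.2
        have hlt : ((τ p.2 : Fin n) : ℕ) < ((τ p.1 : Fin n) : ℕ) := Fin.lt_def.mp hpS'.2.1
        have hlr : 12 * ((τ p.1 : Fin n) : ℕ) < 12 * ((τ p.2 : Fin n) : ℕ) + n := by
          have hc3 : c * (n:ℝ) / 4 ≤ (n:ℝ) / 12 := by
            have h0 : (0:ℝ) ≤ (n:ℝ) := Nat.cast_nonneg n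
            have h1 : c * (n:ℝ) ≤ (1/3) * (n:ℝ) := mul_le_mul_of_nonneg_right hc.le h0
            linarith
          have hr : (((τ p.1 : Fin n) : ℕ) : ℝ) < (((τ p.2 : Fin n) : ℕ) : ℝ) + (n:ℝ)/12 := by
            have := hpS'.2.2
            linarith
          have hr2 : (12 * ((τ p.1 : Fin n) : ℕ) : ℝ) < (12 * ((τ p.2 : Fin n) : ℕ) : ℝ) + (n:ℝ) := by
            push_cast
            push_cast at hr
            linarith
          exact_mod_cast hr2
        rw [hCCdef] at hm1 hm2
        rw [Finset.mem_union] at hm1 hm2 ⊢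
        have i1 : ((τ p.1 : Fin n) : ℕ) < n := (τ p.1).isLt
        have i2 : ((τ p.2 : Fin n) : ℕ) < n := (τ p.2).isLt
        rcases hm1 with hm1 | hm1 <;> rcases hm2 with hm2 | hm2
        · left
          rw [Finset.mem_filter]
          exact ⟨hpS, hm1, hm2⟩
        · -- p.1 in lower interval, p.2 in upper: impossible since pos p.2 < pos p.1
          exfalso
          have e1 := mem_posIn.mp hm1
          have e2 := mem_posIn.mp hm2
          omega
        · -- p.1 in upper, p.2 in lower: straddling, impossible for short edges
          exfalso
          have e1 := mem_posIn.mp hm1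
          have e2 := mem_posIn.mp hm2
          omega
        · right
          rw [Finset.mem_filter]
          exact ⟨hpS, hm1, hm2⟩
      calc (Short.filter fun p : V × V => p.1 ∈ CC k ∧ p.2 ∈ CC k).card
          ≤ _ := Finset.card_le_card hsub
        _ ≤ _ := Finset.card_union_le _ _
    -- assemble the per-candidate chain
    have chain : (Short.filter fun p : V × V => p.1 ∈ CC k ∧ p.2 ∈ CC k).card
        ≤ backCount (fun u v : ↥(CC k) => E ↑u ↑v) σ' := by
      rw [b1]
      calc (Short.filter fun p : V × V => p.1 ∈ CC k ∧ p.2 ∈ CC k).card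
          ≤ _ + _ := b6
        _ ≤ _ + _ := Nat.add_le_add (b5 (L1 k) (R1 k)) (b5 (L2 k) n)
        _ ≤ _ + _ := Nat.add_le_add b3 b4
        _ ≤ _ := b2
    calc ((Short.filter fun p : V × V => p.1 ∈ CC k ∧ p.2 ∈ CC k).card : ℝ)
        ≤ (backCount (fun u v : ↥(CC k) => E ↑u ↑v) σ' : ℝ) := by exact_mod_cast chain
      _ < 2 * (1 - c) * ε * (h : ℝ) ^ 2 := hσ'
  
  -- double counting: each short edge lies in many candidates
  have percnt : ∀ p ∈ Short,
      h ≤ ((Finset.Icc 1 n).filter fun k => p.1 ∈ CC k ∧ p.2 ∈ CC k).card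
        + (((τ p.1 : Fin n) : ℕ) - ((τ p.2 : Fin n) : ℕ)) := by
    intro p hp
    have hpS' : E p.1 p.2 ∧ τ p.2 < τ p.1 ∧
        (((τ p.1 : ℕ) : ℝ) - ((τ p.2 : ℕ) : ℝ) < c * (n : ℝ) / 4) := by
      rw [hShortdef, Finset.mem_filter] at hp
      exact hp.2
    have hlt : ((τ p.2 : Fin n) : ℕ) < ((τ p.1 : Fin n) : ℕ) := Fin.lt_def.mp hpS'.2.1
    have hlr : 12 * ((τ p.1 : Fin n) : ℕ) < 12 * ((τ p.2 : Fin n) : ℕ) + n := by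
      have hc3 : c * (n:ℝ) / 4 ≤ (n:ℝ) / 12 := by
        have h0 : (0:ℝ) ≤ (n:ℝ) := Nat.cast_nonneg n
        have h1 : c * (n:ℝ) ≤ (1/3) * (n:ℝ) := mul_le_mul_of_nonneg_right hc.le h0
        linarith
      have hr : (((τ p.1 : Fin n) : ℕ) : ℝ) < (((τ p.2 : Fin n) : ℕ) : ℝ) + (n:ℝ)/12 := by
        have := hpS'.2.2
        linarith
      have hr2 : (12 * ((τ p.1 : Fin n) : ℕ) : ℝ) < (12 * ((τ p.2 : Fin n) : ℕ) : ℝ) + (n:ℝ) := by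
        push_cast
        push_cast at hr
        linarith
      exact_mod_cast hr2
    have i1 : ((τ p.1 : Fin n) : ℕ) < n := (τ p.1).isLt
    have i2 : ((τ p.2 : Fin n) : ℕ) < n := (τ p.2).isLt
    have hsubG : Finset.Ioc (((τ p.1 : Fin n) : ℕ) - h) ((τ p.2 : Fin n) : ℕ)
          ∪ Finset.Ioc (((τ p.1 : Fin n) : ℕ) + q) n
        ⊆ (Finset.Icc 1 n).filter fun k => p.1 ∈ CC k ∧ p.2 ∈ CC k := by
      intro k hk
      rw [Finset.mem_union, Finset.mem_Ioc, Finset.mem_Ioc] at hk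
      rw [Finset.mem_filter, Finset.mem_Icc]
      rcases hk with ⟨hk1, hk2⟩ | ⟨hk1, hk2⟩
      · refine ⟨⟨by omega, by omega⟩, ?_, ?_⟩
        · rw [hCCdef]
          simp only []
          rw [Finset.mem_union]
          by_cases hkq : k ≤ q
          · left
            obtain ⟨e1, e2, e3⟩ := (hevals k).1 hkq
            rw [mem_posIn, e1, e2]
            omega
          · right
            obtain ⟨e1, e2, e3⟩ := (hevals k).2 hkq
            rw [mem_posIn, e3]
            omega
        · rw [hCCdef]
          simp only []
          rw [Finset.mem_union]
          by_cases hkq : k ≤ q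
          · left
            obtain ⟨e1, e2, e3⟩ := (hevals k).1 hkq
            rw [mem_posIn, e1, e2]
            omega
          · right
            obtain ⟨e1, e2, e3⟩ := (hevals k).2 hkq
            rw [mem_posIn, e3]
            omega
      · have hkq : ¬ k ≤ q := by omega
        obtain ⟨e1, e2, e3⟩ := (hevals k).2 hkq
        refine ⟨⟨by omega, by omega⟩, ?_, ?_⟩
        · rw [hCCdef]
          simp only []
          rw [Finset.mem_union]
          left
          rw [mem_posIn, e1, e2]
          omega
        · rw [hCCdef]
          simp only []
          rw [Finset.mem_union]
          left
          rw [mem_posIn, e1, e2]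
          omega
    have hdisjG : Disjoint (Finset.Ioc (((τ p.1 : Fin n) : ℕ) - h) ((τ p.2 : Fin n) : ℕ))
        (Finset.Ioc (((τ p.1 : Fin n) : ℕ) + q) n) := by
      rw [Finset.disjoint_left]
      intro k hk1 hk2
      rw [Finset.mem_Ioc] at hk1 hk2
      omega
    have hcardsub := Finset.card_le_card hsubG
    rw [Finset.card_union_of_disjoint hdisjG, Nat.card_Ioc, Nat.card_Ioc] at hcardsub
    omega
  -- sum the per-candidate bounds
  have hswap : ∑ k ∈ Finset.Icc 1 n, (Short.filter fun p : V × V => p.1 ∈ CC k ∧ p.2 ∈ CC k).card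
      = ∑ p ∈ Short, ((Finset.Icc 1 n).filter fun k => p.1 ∈ CC k ∧ p.2 ∈ CC k).card := by
    simp only [Finset.card_filter]
    exact Finset.sum_comm
  have hIccne : (Finset.Icc 1 n).Nonempty := ⟨1, Finset.mem_Icc.mpr (by omega)⟩
  have hsum3 : (∑ k ∈ Finset.Icc 1 n,
      ((Short.filter fun p : V × V => p.1 ∈ CC k ∧ p.2 ∈ CC k).card : ℝ))
      < (n : ℝ) * (2 * (1 - c) * ε * (h : ℝ) ^ 2) := by
    have e1 := Finset.sum_lt_sum_of_nonempty hIccne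
      (f := fun k => ((Short.filter fun p : V × V => p.1 ∈ CC k ∧ p.2 ∈ CC k).card : ℝ))
      (g := fun _ => 2 * (1 - c) * ε * (h : ℝ) ^ 2)
      (by
        intro k hk
        rw [Finset.mem_Icc] at hk
        exact key k hk.1 hk.2)
    rw [Finset.sum_const, Nat.card_Icc] at e1
    simp only [Nat.add_sub_cancel] at e1
    rw [nsmul_eq_mul] at e1
    exact e1
  have hsum1 : (Short.card : ℝ) * ((h : ℝ) - c * (n : ℝ) / 4)
      ≤ ∑ p ∈ Short, (((Finset.Icc 1 n).filter fun k => p.1 ∈ CC k ∧ p.2 ∈ CC k).card : ℝ) := by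
    have e1 : ∀ p ∈ Short, (h : ℝ) - c * (n : ℝ) / 4
        ≤ (((Finset.Icc 1 n).filter fun k => p.1 ∈ CC k ∧ p.2 ∈ CC k).card : ℝ) := by
      intro p hp
      have e2 := percnt p hp
      have hpS' : E p.1 p.2 ∧ τ p.2 < τ p.1 ∧
          (((τ p.1 : ℕ) : ℝ) - ((τ p.2 : ℕ) : ℝ) < c * (n : ℝ) / 4) := by
        rw [hShortdef, Finset.mem_filter] at hp
        exact hp.2
      have hlt : ((τ p.2 : Fin n) : ℕ) < ((τ p.1 : Fin n) : ℕ) := Fin.lt_def.mp hpS'.2.1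
      have e3 : (h : ℝ) ≤ (((Finset.Icc 1 n).filter fun k => p.1 ∈ CC k ∧ p.2 ∈ CC k).card : ℝ)
          + ((((τ p.1 : Fin n) : ℕ) : ℝ) - (((τ p.2 : Fin n) : ℕ) : ℝ)) := by
        have e4 : ((h : ℕ) : ℝ) ≤ ((((Finset.Icc 1 n).filter fun k =>
            p.1 ∈ CC k ∧ p.2 ∈ CC k).card + (((τ p.1 : Fin n) : ℕ) - ((τ p.2 : Fin n) : ℕ)) : ℕ) : ℝ) := by
          exact_mod_cast e2
        push_cast at e4
        rw [Nat.cast_sub hlt.le] at e4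
        linarith
      linarith [hpS'.2.2]
    calc (Short.card : ℝ) * ((h : ℝ) - c * (n : ℝ) / 4)
        = ∑ _p ∈ Short, ((h : ℝ) - c * (n : ℝ) / 4) := by
          rw [Finset.sum_const, nsmul_eq_mul]
      _ ≤ _ := Finset.sum_le_sum e1
  have hcast : (∑ p ∈ Short, (((Finset.Icc 1 n).filter fun k => p.1 ∈ CC k ∧ p.2 ∈ CC k).card : ℝ))
      = ∑ k ∈ Finset.Icc 1 n, ((Short.filter fun p : V × V => p.1 ∈ CC k ∧ p.2 ∈ CC k).card : ℝ) := by
    rw [← Nat.cast_sum, ← Nat.cast_sum, hswap]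
  -- final contradiction
  have hpos : (0:ℝ) < (h : ℝ) - c * (n : ℝ) / 4 := by
    have h0 : (0:ℝ) ≤ (n:ℝ) := Nat.cast_nonneg n
    have h1 : c * (n:ℝ) ≤ (1/3) * (n:ℝ) := mul_le_mul_of_nonneg_right hc.le h0
    have h2 : (n : ℝ) ≤ 2 * (h : ℝ) := by exact_mod_cast hh2.1
    have h3 : (24:ℝ) < (n:ℝ) := by exact_mod_cast hn24
    linarith
  have harith := s17_arith (n : ℝ) (h : ℝ) c hc0 hc hcn
    (by exact_mod_cast hh2.1) (by exact_mod_cast hh2.2)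
  have hmul := mul_le_mul_of_nonneg_left harith hε0.le
  have hSmul := mul_lt_mul_of_pos_right hShortcard hpos
  nlinarith [hsum1, hsum3, hSmul, hmul, hcast]
end

section
/- Let k be a positive integer divisible by 10, let τ be a linear ordering of the vertex set of a tournament R, and call an edge u → v of R backward if v precedes u in τ. If R contains the k-th power of a directed cycle of length at least k, then there exist disjoint vertex sets U and W, each of size k/10, such that every edge between U and W is a backward edge directed from U to W (i.e., the backward edges of R with respect to τ contain a complete bipartite graph K_{k/10,k/10} directed from U to W). -/
open Finset

attribute [local instance] Classical.propDecidable

private lemma exists_half_filter (m : ℕ) (hm : 2 ≤ m) (p : ℕ → ℕ)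
    (hp : ∀ i < m, ∀ j < m, p i = p j → i = j) :
    ∃ θ : ℕ, ((range m).filter fun j => θ ≤ p j).card = (m + 1) / 2 := by
  set g : ℕ → ℕ := fun θ => ((range m).filter fun j => θ ≤ p j).card with hg
  have hg0 : g 0 = m := by
    simp only [hg]
    rw [Finset.filter_true_of_mem (fun j _ => Nat.zero_le _)]
    exact card_range m
  have hB : ∃ θ, g θ ≤ (m + 1) / 2 := by
    refine ⟨(∑ j ∈ range m, p j) + 1, ?_⟩
    have he : ((range m).filter fun j => (∑ j ∈ range m, p j) + 1 ≤ p j) = ∅ := by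
      apply Finset.filter_false_of_mem
      intro j hj
      have := Finset.single_le_sum (f := p) (fun i _ => Nat.zero_le _) hj
      omega
    simp only [hg, he, card_empty]
    omega
  have hspec : g (Nat.find hB) ≤ (m + 1) / 2 := Nat.find_spec hB
  have hθ0 : Nat.find hB ≠ 0 := by
    intro h
    rw [h, hg0] at hspec
    omega
  obtain ⟨ψ, hψ⟩ : ∃ ψ, Nat.find hB = ψ + 1 := ⟨Nat.find hB - 1, by omega⟩
  have hmin : ¬ g ψ ≤ (m + 1) / 2 := Nat.find_min hB (by omega)
  have hstep : g ψ ≤ g (ψ + 1) + 1 := by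
    have hsub : ((range m).filter fun j => ψ ≤ p j) ⊆
        ((range m).filter fun j => ψ + 1 ≤ p j) ∪ ((range m).filter fun j => p j = ψ) := by
      intro j hj
      simp only [mem_filter, mem_union, mem_range] at hj ⊢
      omega
    have h1 : ((range m).filter fun j => p j = ψ).card ≤ 1 := by
      apply Finset.card_le_one.mpr
      intro a ha b hb
      simp only [mem_filter, mem_range] at ha hb
      exact hp a ha.1 b hb.1 (ha.2.trans hb.2.symm)
    calc g ψ ≤ (((range m).filter fun j => ψ + 1 ≤ p j) ∪
        ((range m).filter fun j => p j = ψ)).card := card_le_card hsub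
      _ ≤ g (ψ + 1) + ((range m).filter fun j => p j = ψ).card := card_union_le _ _
      _ ≤ g (ψ + 1) + 1 := by omega
  rw [hψ] at hspec
  exact ⟨ψ + 1, by show g (ψ + 1) = (m + 1) / 2; omega⟩

private lemma aux_card_shift (m s : ℕ) (hm : 0 < m) (hs : s < m) (H : Finset ℕ)
    (hH : H ⊆ range m) :
    ((range m).filter fun i => (i + s) % m ∈ H).card = H.card := by
  apply Finset.card_bij (fun i _ => (i + s) % m)
  · intro a ha; exact (mem_filter.mp ha).2
  · intro a₁ h₁ a₂ h₂ h
    have m₁ := mem_range.mp (mem_filter.mp h₁).1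
    have m₂ := mem_range.mp (mem_filter.mp h₂).1
    have h' : a₁ % m = a₂ % m := Nat.ModEq.add_right_cancel' s h
    rwa [Nat.mod_eq_of_lt m₁, Nat.mod_eq_of_lt m₂] at h'
  · intro b hb
    have hbm : b < m := mem_range.mp (hH hb)
    have hkey : ((b + m - s) % m + s) % m = b := by
      rw [Nat.mod_add_mod]
      have h2 : b + m - s + s = b + m := by omega
      rw [h2, Nat.add_mod_right, Nat.mod_eq_of_lt hbm]
    refine ⟨(b + m - s) % m, mem_filter.mpr ⟨mem_range.mpr (Nat.mod_lt _ hm), ?_⟩, hkey⟩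
    rw [hkey]; exact hb

private lemma core_lemma (t m : ℕ) (ht : 1 ≤ t) (hm : 10 * t ≤ m)
    (H : Finset ℕ) (hHsub : H ⊆ range m) (hHcard : H.card = (m + 1) / 2) :
    ∃ i, t ≤ ((Ico i (i + 5*t)).filter fun j => j % m ∈ H).card ∧
      ((Ico (i + 5*t) (i + 5*t + 5*t)).filter fun j => j % m ∈ H).card ≤ 4*t := by
  have hm0 : 0 < m := by omega
  set c : ℕ → ℕ := fun i => ((Ico i (i + 5*t)).filter fun j => j % m ∈ H).card with hc
  -- Lipschitz steps
  have lip1 : ∀ i, c i ≤ c (i+1) + 1 := by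
    intro i
    have hsub : Ico i (i + 5*t) ⊆ insert i (Ico (i+1) (i+1 + 5*t)) := by
      intro j hj
      simp only [mem_Ico] at hj
      simp only [mem_insert, mem_Ico]
      omega
    calc c i ≤ ((insert i (Ico (i+1) (i+1+5*t))).filter fun j => j % m ∈ H).card :=
          card_le_card (filter_subset_filter _ hsub)
      _ ≤ c (i+1) + 1 := by
          rw [filter_insert]
          split
          · exact card_insert_le _ _
          · exact Nat.le_succ_of_le le_rfl
  have lip2 : ∀ i, c (i+1) ≤ c i + 1 := by
    intro i
    have hsub : Ico (i+1) (i+1+5*t) ⊆ insert (i + 5*t) (Ico i (i + 5*t)) := by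
      intro j hj
      simp only [mem_Ico] at hj
      simp only [mem_insert, mem_Ico]
      omega
    calc c (i+1) ≤ ((insert (i+5*t) (Ico i (i+5*t))).filter fun j => j % m ∈ H).card :=
          card_le_card (filter_subset_filter _ hsub)
      _ ≤ c i + 1 := by
          rw [filter_insert]
          split
          · exact card_insert_le _ _
          · exact Nat.le_succ_of_le le_rfl
  have lipD : ∀ i d, c i ≤ c (i + d) + d ∧ c (i + d) ≤ c i + d := by
    intro i d
    induction d with
    | zero => simp
    | succ d ih =>
      have h1 := lip1 (i + d)
      have h2 := lip2 (i + d)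
      have e : i + (d + 1) = i + d + 1 := by omega
      rw [e]
      omega
  -- periodicity
  have per : ∀ i, c (i + m) = c i := by
    intro i
    simp only [hc]
    apply Finset.card_bij (fun j _ => j - m)
    · intro a ha
      simp only [mem_filter, mem_Ico] at ha ⊢
      have hme : a - m + m = a := by omega
      constructor
      · omega
      · have : (a - m) % m = a % m := by
          conv_rhs => rw [← hme]
          rw [Nat.add_mod_right]
        rw [this]; exact ha.2
    · intro a₁ h₁ a₂ h₂ h
      simp only [mem_filter, mem_Ico] at h₁ h₂
      omega
    · intro b hb
      simp only [mem_filter, mem_Ico] at hb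
      refine ⟨b + m, ?_, by omega⟩
      simp only [mem_filter, mem_Ico, Nat.add_mod_right]
      exact ⟨by omega, hb.2⟩
  have perQ : ∀ i q, c (i + q * m) = c i := by
    intro i q
    induction q with
    | zero => simp
    | succ q ih =>
      have e : i + (q + 1) * m = (i + q * m) + m := by ring
      rw [e, per, ih]
  -- total sum
  have sumc : ∑ i ∈ range m, c i = 5 * t * H.card := by
    have h1 : ∀ i, c i = ∑ s ∈ range (5*t), (if (i + s) % m ∈ H then 1 else 0) := by
      intro i
      simp only [hc]
      rw [Finset.card_filter, Finset.sum_Ico_eq_sum_range]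
      simp
    calc ∑ i ∈ range m, c i
        = ∑ i ∈ range m, ∑ s ∈ range (5*t), (if (i + s) % m ∈ H then 1 else 0) := by
          exact Finset.sum_congr rfl fun i _ => h1 i
      _ = ∑ s ∈ range (5*t), ∑ i ∈ range m, (if (i + s) % m ∈ H then 1 else 0) :=
          Finset.sum_comm
      _ = ∑ s ∈ range (5*t), H.card := by
          refine Finset.sum_congr rfl fun s hs => ?_
          rw [← Finset.card_filter]
          exact aux_card_shift m s hm0 (by have := mem_range.mp hs; omega) H hHsub
      _ = 5 * t * H.card := by
          rw [Finset.sum_const, card_range, smul_eq_mul]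
  -- main contradiction
  by_contra hcon
  push_neg at hcon
  have Himp : ∀ i, t ≤ c i → 4 * t + 1 ≤ c (i + 5*t) := by
    intro i hi
    have h : 4 * t < c (i + 5*t) := hcon i hi
    omega
  -- some window with many H-elements
  have hA : ∃ i₁, t ≤ c i₁ := by
    by_contra hno
    push_neg at hno
    have hsum : ∑ i ∈ range m, c i ≤ m * (t - 1) := by
      calc ∑ i ∈ range m, c i ≤ (range m).card • (t - 1) :=
            Finset.sum_le_card_nsmul _ _ _ (fun i _ => by have := hno i; omega)
        _ = m * (t - 1) := by rw [card_range, smul_eq_mul]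
    have k1 : m ≤ 5 * ((m + 1) / 2) := by omega
    have k2 : t * m ≤ t * (5 * ((m + 1) / 2)) := Nat.mul_le_mul_left t k1
    have k3 : t * (5 * ((m + 1) / 2)) = 5 * t * H.card := by rw [hHcard]; ring
    rw [k3, ← sumc] at k2
    obtain ⟨t', rfl⟩ : ∃ t', t = t' + 1 := ⟨t - 1, by omega⟩
    simp only [Nat.add_sub_cancel] at hsum
    nlinarith
  obtain ⟨i₁, hi₁⟩ := hA
  have key : 4 * t + 1 ≤ c (i₁ + 5*t) := Himp i₁ hi₁
  -- spread: all shifted positions have c ≥ t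
  have S : ∀ s, t ≤ c (i₁ + (2*t - 1) + s) := by
    intro s
    induction s using Nat.strong_induction_on with
    | _ s ih =>
      by_cases hs : s < 5 * t
      · rcases le_or_gt s (3*t + 1) with h1 | h1
        · have e : i₁ + (2*t - 1) + s + (3*t + 1 - s) = i₁ + 5*t := by omega
          have hl := (lipD (i₁ + (2*t - 1) + s) (3*t + 1 - s)).2
          rw [e] at hl
          omega
        · have e : i₁ + 5*t + (s - (3*t + 1)) = i₁ + (2*t - 1) + s := by omega
          have hl := (lipD (i₁ + 5*t) (s - (3*t + 1))).1
          rw [e] at hl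
          omega
      · have h5 : 5 * t ≤ s := by omega
        have ih' := ih (s - 5*t) (by omega)
        have h := Himp _ ih'
        have e : i₁ + (2*t - 1) + (s - 5*t) + 5*t = i₁ + (2*t - 1) + s := by omega
        rw [e] at h
        omega
  -- hence all positions
  have allge : ∀ j, t ≤ c j := by
    intro j
    set a := i₁ + (2*t - 1) with ha
    have hma : a + 1 ≤ (a + 1) * m := Nat.le_mul_of_pos_right (a + 1) hm0
    have hS := S (j + (a + 1) * m - a)
    have e : a + (j + (a + 1) * m - a) = j + (a + 1) * m := by omega
    rw [e] at hS
    have pq := perQ j (a + 1)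
    omega
  have allge4 : ∀ j, 4 * t + 1 ≤ c j := by
    intro j
    have h := Himp (j + m - 5*t) (allge _)
    have e : j + m - 5*t + 5*t = j + m := by omega
    rw [e, per j] at h
    exact h
  -- final sum contradiction
  have hsum2 : m * (4 * t + 1) ≤ ∑ i ∈ range m, c i := by
    calc m * (4 * t + 1) = (range m).card • (4 * t + 1) := by rw [card_range, smul_eq_mul]
      _ ≤ ∑ i ∈ range m, c i := Finset.card_nsmul_le_sum _ _ _ (fun i _ => allge4 i)
  rw [sumc, hHcard] at hsum2
  have h2 : 2 * ((m + 1) / 2) ≤ m + 1 := by omega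
  have h3 : 5 * t * (2 * ((m + 1) / 2)) ≤ 5 * t * (m + 1) := Nat.mul_le_mul_left _ h2
  nlinarith

/-- if a tournament contains the `k`-th power of a cycle of length at
least `k`, then for any vertex ordering the backward edges contain a complete
bipartite `K_{k/10,k/10}` directed from `U` to `W`. -/
theorem statement_19 (k : ℕ) (hk : 0 < k) (hdvd : 10 ∣ k)
    (V : Type) [Fintype V] (E : V → V → Prop) (hT : IsTournament E)
    (τ : V ≃ Fin (Fintype.card V))
    (m : ℕ) (hm : k ≤ m) (x : Fin m → V) (hx : IsCyclePower E k m x) :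
    ∃ U W : Finset V, Disjoint U W ∧ U.card = k / 10 ∧ W.card = k / 10 ∧
      ∀ u ∈ U, ∀ w ∈ W, E u w ∧ τ w < τ u := by
  obtain ⟨t, rfl⟩ := hdvd
  have ht : 1 ≤ t := by omega
  have hm0 : 0 < m := by omega
  have hm2 : 2 ≤ m := by omega
  have hmt : 10 * t ≤ m := hm
  have hdiv : 10 * t / 10 = t := by omega
  set f : ℕ → V := fun j => x ⟨j % m, Nat.mod_lt _ hm0⟩ with hf_def
  set p : ℕ → ℕ := fun j => ((τ (f j)) : ℕ) with hp_def
  have hpmod : ∀ j, p (j % m) = p j := by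
    intro j
    have hmm : j % m % m = j % m := Nat.mod_mod_of_dvd j dvd_rfl
    simp only [hp_def, hf_def, hmm]
  have hpinj : ∀ i < m, ∀ j < m, p i = p j → i = j := by
    intro i hi j hj hij
    simp only [hp_def, hf_def] at hij
    have h1 : τ (x ⟨i % m, Nat.mod_lt _ hm0⟩) = τ (x ⟨j % m, Nat.mod_lt _ hm0⟩) :=
      Fin.val_injective hij
    have h2 := hx.1 (τ.injective h1)
    have h3 : i % m = j % m := congrArg Fin.val h2
    rwa [Nat.mod_eq_of_lt hi, Nat.mod_eq_of_lt hj] at h3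
  obtain ⟨θ, hθ⟩ := exists_half_filter m hm2 p hpinj
  set H : Finset ℕ := (range m).filter fun j => θ ≤ p j with hH_def
  obtain ⟨i, hU1, hW1⟩ := core_lemma t m ht hmt H (filter_subset _ _) hθ
  have hWcount : t ≤ ((Ico (i + 5*t) (i + 5*t + 5*t)).filter fun j => ¬ (j % m ∈ H)).card := by
    have hsplit := Finset.card_filter_add_card_filter_not
      (s := Ico (i + 5*t) (i + 5*t + 5*t)) (p := fun j => j % m ∈ H)
    rw [Nat.card_Ico] at hsplit
    omega
  obtain ⟨SU, hSUsub, hSUcard⟩ := Finset.exists_subset_card_eq hU1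
  obtain ⟨SW, hSWsub, hSWcard⟩ := Finset.exists_subset_card_eq hWcount
  have hSU : ∀ j ∈ SU, (i ≤ j ∧ j < i + 5*t) ∧ j % m ∈ H := by
    intro j hj
    have := hSUsub hj
    simp only [mem_filter, mem_Ico] at this
    exact this
  have hSW : ∀ j ∈ SW, (i + 5*t ≤ j ∧ j < i + 5*t + 5*t) ∧ j % m ∉ H := by
    intro j hj
    have := hSWsub hj
    simp only [mem_filter, mem_Ico] at this
    exact this
  have finj : ∀ j1 j2, i ≤ j1 → j1 < i + 10*t → i ≤ j2 → j2 < i + 10*t →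
      f j1 = f j2 → j1 = j2 := by
    intro j1 j2 h1 h2 h3 h4 hf
    simp only [hf_def] at hf
    have hmk := hx.1 hf
    have hmm : j1 % m = j2 % m := congrArg Fin.val hmk
    rcases le_total j1 j2 with hle | hle
    · have hd : m ∣ j2 - j1 := (Nat.modEq_iff_dvd' hle).mp hmm
      have hz : j2 - j1 = 0 := Nat.eq_zero_of_dvd_of_lt hd (by omega)
      omega
    · have hd : m ∣ j1 - j2 := (Nat.modEq_iff_dvd' hle).mp hmm.symm
      have hz : j1 - j2 = 0 := Nat.eq_zero_of_dvd_of_lt hd (by omega)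
      omega
  refine ⟨SU.image f, SW.image f, ?_, ?_, ?_, ?_⟩
  · rw [Finset.disjoint_left]
    intro v hvU hvW
    obtain ⟨j1, hj1, hfe1⟩ := mem_image.mp hvU
    obtain ⟨j2, hj2, hfe2⟩ := mem_image.mp hvW
    have hfe : f j1 = f j2 := hfe1.trans hfe2.symm
    simp only [hf_def] at hfe
    have hmm : j1 % m = j2 % m := congrArg Fin.val (hx.1 hfe)
    exact (hSW j2 hj2).2 (hmm ▸ (hSU j1 hj1).2)
  · rw [Finset.card_image_of_injOn, hSUcard, hdiv]
    intro a ha b hb hab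
    have ha' := hSU a (by simpa using ha)
    have hb' := hSU b (by simpa using hb)
    exact finj a b ha'.1.1 (by omega) hb'.1.1 (by omega) hab
  · rw [Finset.card_image_of_injOn, hSWcard, hdiv]
    intro a ha b hb hab
    have ha' := hSW a (by simpa using ha)
    have hb' := hSW b (by simpa using hb)
    exact finj a b (by omega) (by omega) (by omega) (by omega) hab
  · intro u hu w hw
    obtain ⟨j1, hj1, hfe1⟩ := mem_image.mp hu
    obtain ⟨j2, hj2, hfe2⟩ := mem_image.mp hw
    obtain ⟨⟨hj1a, hj1b⟩, hj1H⟩ := hSU j1 hj1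
    obtain ⟨⟨hj2a, hj2b⟩, hj2H⟩ := hSW j2 hj2
    subst hfe1 hfe2
    constructor
    · -- the edge
      have hd1 : 1 ≤ j2 - j1 := by omega
      have hd2 : j2 - j1 ≤ 10 * t := by omega
      have hedge := hx.2 ⟨j1 % m, Nat.mod_lt _ hm0⟩ (j2 - j1) hd1 hd2
      have hval : (j1 % m + (j2 - j1)) % m = j2 % m := by
        rw [Nat.mod_add_mod]
        congr 1
        omega
      have hfin : (⟨(j1 % m + (j2 - j1)) % m, Nat.mod_lt _ hm0⟩ : Fin m)
          = ⟨j2 % m, Nat.mod_lt _ hm0⟩ := Fin.ext hval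
      rw [hfin] at hedge
      exact hedge
    · -- the order
      have h1 : θ ≤ p (j1 % m) := by
        have := hj1H
        rw [hH_def, mem_filter] at this
        exact this.2
      have h2 : p (j2 % m) < θ := by
        by_contra hcc
        push_neg at hcc
        exact hj2H (by rw [hH_def, mem_filter]; exact ⟨mem_range.mpr (Nat.mod_lt _ hm0), hcc⟩)
      have hlt : p j2 < p j1 := by
        rw [← hpmod j1, ← hpmod j2]
        omega
      simp only [hp_def] at hlt
      exact hlt
end
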